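/- Quasi-Lifting Lemma (synchronous case): suppose K is a quasi-fibration of H of center v and radius r via γ. For a deterministic synchronous cellular algorithm (every vertex updates at every round using its own state and the multiset of in-neighbor states), if both K and H start in initial states compatible via γ (each vertex x of B⁻_K(v,r) has the same initial state as γ(x)), then for every round t ≤ r, the state of v in K after t rounds equals the state of γ(v) in H after t rounds. -/

import Mathlib

/-- A digraph with possibly multiple arcs and self-loops. -/
structure MDigraph where
  V : Type
  A : Type
  src : A → V
  tgt : A → V

/-- A homomorphism of digraphs: maps vertices to vertices and arcs to arcs,
preserving sources and targets. -/
structure DHom (D₁ D₂ : MDigraph) where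
  onV : D₁.V → D₂.V
  onA : D₁.A → D₂.A
  map_src : ∀ a, onV (D₁.src a) = D₂.src (onA a)
  map_tgt : ∀ a, onV (D₁.tgt a) = D₂.tgt (onA a)

/-- Composition of digraph homomorphisms. -/
def DHom.comp {D₁ D₂ D₃ : MDigraph} (g : DHom D₂ D₃) (f : DHom D₁ D₂) : DHom D₁ D₃ where
  onV := g.onV ∘ f.onV
  onA := g.onA ∘ f.onA
  map_src := by intro a; simp [Function.comp, f.map_src, g.map_src]
  map_tgt := by intro a; simp [Function.comp, f.map_tgt, g.map_tgt]

/-- `φ : D₁ → D₂` is a fibration if every arc of `D₂` lifts uniquely at every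
preimage of its target. -/
def IsFibration {D₁ D₂ : MDigraph} (φ : DHom D₁ D₂) : Prop :=
  ∀ (a : D₂.A) (v : D₁.V), φ.onV v = D₂.tgt a →
    ∃! a' : D₁.A, φ.onA a' = a ∧ D₁.tgt a' = v

/-- `ReachLE D k w v` : there is a dipath of length at most `k` from `w` to `v`. -/
def ReachLE (D : MDigraph) : ℕ → D.V → D.V → Prop
  | 0, w, v => w = v
  | n+1, w, v => w = v ∨ ∃ a : D.A, D.src a = w ∧ ReachLE D n (D.tgt a) v

theorem ReachLE.mono {D : MDigraph} : ∀ {k r : ℕ}, k ≤ r → ∀ {w v : D.V},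
    ReachLE D k w v → ReachLE D r w v := by
  intro k
  induction k with
  | zero =>
    intro r _ w v h
    cases r with
    | zero => exact h
    | succ n => exact Or.inl h
  | succ n ih =>
    intro r hle w v h
    cases r with
    | zero => omega
    | succ m =>
      rcases h with h | ⟨a, ha, hr⟩
      · exact Or.inl h
      · exact Or.inr ⟨a, ha, ih (by omega) hr⟩

/-- Vertices of the in-ball of center `v` and radius `r`. -/
def inBallV (D : MDigraph) (v : D.V) (r : ℕ) : Set D.V := {w | ReachLE D r w v}

/-- Arcs of the in-ball of center `v` and radius `r`: arcs lying on a dipath of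
length at most `r` ending at `v`. -/
def inBallA (D : MDigraph) (v : D.V) (r : ℕ) : Set D.A :=
  {a | ∃ k, k + 1 ≤ r ∧ ReachLE D k (D.tgt a) v}

/-- The in-ball `B⁻_D(v,r)` as a digraph. -/
def inBall (D : MDigraph) (v : D.V) (r : ℕ) : MDigraph where
  V := {w // w ∈ inBallV D v r}
  A := {a // a ∈ inBallA D v r}
  src a := ⟨D.src a.val, by
    obtain ⟨k, hk, hr⟩ := a.property
    exact ReachLE.mono hk (Or.inr ⟨a.val, rfl, hr⟩)⟩
  tgt a := ⟨D.tgt a.val, by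
    obtain ⟨k, hk, hr⟩ := a.property
    exact ReachLE.mono (by omega) hr⟩

theorem center_mem (D : MDigraph) (v : D.V) (r : ℕ) : v ∈ inBallV D v r :=
  ReachLE.mono (Nat.zero_le r) (show ReachLE D 0 v v from rfl)

/-- The inclusion homomorphism of the in-ball into the digraph. -/
def ballIncl (D : MDigraph) (v : D.V) (r : ℕ) : DHom (inBall D v r) D where
  onV := Subtype.val
  onA := Subtype.val
  map_src := fun _ => rfl
  map_tgt := fun _ => rfl

/-- `K` is a quasi-fibration of `H` of center `v` and radius `r` via
`γ : B⁻_K(v,r) → H`: there are a digraph `G`, a fibration `φ : G → H`, a vertex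
`w` of `G` and an isomorphism `δ : B⁻_K(v,r) → B⁻_G(w,r)` sending `v` to `w`
with `γ = φ ∘ δ`. -/
def IsQuasiFibration (K H : MDigraph) (v : K.V) (r : ℕ)
    (γ : DHom (inBall K v r) H) : Prop :=
  ∃ (G : MDigraph) (φ : DHom G H) (w : G.V) (δ : DHom (inBall K v r) (inBall G w r)),
    IsFibration φ ∧ Function.Bijective δ.onV ∧ Function.Bijective δ.onA ∧
    δ.onV ⟨v, center_mem K v r⟩ = ⟨w, center_mem G w r⟩ ∧
    γ = (φ.comp (ballIncl G w r)).comp δ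

/-- The multiset of states of the in-neighbors of `v` (one per incoming arc). -/
noncomputable def inNbhd {Λ : Type} (D : MDigraph) [Fintype D.A] (x : D.V → Λ) (v : D.V) :
    Multiset Λ :=
  letI : DecidablePred (fun a : D.A => D.tgt a = v) := Classical.decPred _
  ((Finset.univ : Finset D.A).filter (fun a => D.tgt a = v)).val.map (fun a => x (D.src a))

/-- `x` is an execution of the algorithm `δ` under activation sets `Act`:
at each step, every activated vertex atomically replaces its state by
`δ(current state, multiset of in-neighbor states)` and every other vertex keeps its state. -/
def IsExecution {Λ : Type} (D : MDigraph) [Fintype D.A] (δ : Λ → Multiset Λ → Λ)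
    (Act : ℕ → Set D.V) (x : ℕ → D.V → Λ) : Prop :=
  ∀ t v, (v ∈ Act (t + 1) → x (t + 1) v = δ (x t v) (inNbhd D (x t) v)) ∧
         (v ∉ Act (t + 1) → x (t + 1) v = x t v)

/-- The synchronous run of the algorithm `δ` from initial states `x0`. -/
noncomputable def syncRun {Λ : Type} (D : MDigraph) [Fintype D.A]
    (δ : Λ → Multiset Λ → Λ) (x0 : D.V → Λ) : ℕ → D.V → Λ
  | 0 => x0
  | t + 1 => fun v => δ (syncRun D δ x0 t v) (inNbhd D (syncRun D δ x0 t) v)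


theorem DHom.reachLE {D₁ D₂ : MDigraph} (f : DHom D₁ D₂) :
    ∀ {k : ℕ} {x y : D₁.V}, ReachLE D₁ k x y → ReachLE D₂ k (f.onV x) (f.onV y) := by
  intro k
  induction k with
  | zero => intro x y h; exact congrArg f.onV h
  | succ n ih =>
    intro x y h
    rcases h with h | ⟨a, hsrc, hr⟩
    · exact Or.inl (congrArg f.onV h)
    · exact Or.inr ⟨f.onA a, by rw [← f.map_src, hsrc], by rw [← f.map_tgt]; exact ih hr⟩

theorem reachLE_ball {D : MDigraph} {v : D.V} {r : ℕ} :
    ∀ {k : ℕ} {x : D.V} (hx : x ∈ inBallV D v r), k ≤ r → ReachLE D k x v →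
      ReachLE (inBall D v r) k ⟨x, hx⟩ ⟨v, center_mem D v r⟩ := by
  intro k
  induction k with
  | zero => intro x hx _ h; exact Subtype.ext h
  | succ n ih =>
    intro x hx hkr h
    rcases h with h | ⟨a, hsrc, hr⟩
    · exact Or.inl (Subtype.ext h)
    · have hmem : a ∈ inBallA D v r := ⟨n, hkr, hr⟩
      have htv : D.tgt a ∈ inBallV D v r := ReachLE.mono (Nat.le_of_succ_le hkr) hr
      exact Or.inr ⟨⟨a, hmem⟩, Subtype.ext hsrc, ih htv (Nat.le_of_succ_le hkr) hr⟩

theorem inNbhd_congr {Λ : Type} {D₁ D₂ : MDigraph} [Fintype D₁.A] [Fintype D₂.A]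
    (s₁ : D₁.V → Λ) (s₂ : D₂.V → Λ) (u₁ : D₁.V) (u₂ : D₂.V)
    (e : {a : D₁.A // D₁.tgt a = u₁} ≃ {b : D₂.A // D₂.tgt b = u₂})
    (h : ∀ a, s₁ (D₁.src a.1) = s₂ (D₂.src (e a).1)) :
    inNbhd D₁ s₁ u₁ = inNbhd D₂ s₂ u₂ := by
  classical
  have key : ∀ (D : MDigraph) [Fintype D.A] (s : D.V → Λ) (u : D.V),
      inNbhd D s u =
        (Finset.univ : Finset {a : D.A // D.tgt a = u}).val.map (fun a => s (D.src a.1)) := by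
    intro D _ s u
    classical
    show ((Finset.univ : Finset D.A).filter (fun a => D.tgt a = u)).val.map
        (fun a => s (D.src a)) = _
    rw [← Finset.subtype_map (fun a : D.A => D.tgt a = u), Finset.subtype_univ]
    simp [Finset.map_val, Multiset.map_map, Function.comp]
  rw [key, key]
  rw [← Finset.map_univ_equiv e.symm, Finset.map_val, Multiset.map_map]
  congr 1
  funext b
  simp [Function.comp, h (e.symm b)]

/-- Quasi-Lifting Lemma, synchronous case: if `K` is a
quasi-fibration of `H` of center `v` and radius `r` via `γ`, and the initial
states are compatible via `γ` on the in-ball, then for every round `t ≤ r` the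
state of `v` in `K` equals the state of `γ(v)` in `H`. -/
theorem quasi_lifting_lemma {Λ : Type} (K H : MDigraph) [Fintype K.A] [Fintype H.A]
    (v : K.V) (r : ℕ) (γ : DHom (inBall K v r) H) (hq : IsQuasiFibration K H v r γ)
    (δ : Λ → Multiset Λ → Λ) (xK : K.V → Λ) (xH : H.V → Λ)
    (hinit : ∀ x : (inBall K v r).V, xK x.val = xH (γ.onV x)) :
    ∀ t ≤ r, syncRun K δ xK t v = syncRun H δ xH t (γ.onV ⟨v, center_mem K v r⟩) := by
  classical
  obtain ⟨G, φ, w, db, hφ, hbV, hbA, hcen, hγ⟩ := hq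
  set eA : (inBall K v r).A ≃ (inBall G w r).A := Equiv.ofBijective db.onA hbA with heA
  -- main induction
  have main : ∀ t (x : (inBall K v r).V) (k : ℕ), k + t ≤ r → ReachLE K k x.val v →
      syncRun K δ xK t x.val = syncRun H δ xH t (γ.onV x) := by
    intro t
    induction t with
    | zero => intro x k _ _; exact hinit x
    | succ t ih =>
      intro x k hkt hx
      have hkr : k ≤ r := by omega
      -- reach in the ball of G
      have hxball : ReachLE (inBall K v r) k x ⟨v, center_mem K v r⟩ :=
        reachLE_ball x.2 hkr hx
      have hGreach : ReachLE G k (db.onV x).val w := by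
        have h1 := db.reachLE hxball
        rw [hcen] at h1
        exact (ballIncl G w r).reachLE h1
      have hγx : γ.onV x = φ.onV (db.onV x).val := by rw [hγ]; rfl
      -- forward map
      have fwdmem : ∀ a : {a : K.A // K.tgt a = x.val}, a.1 ∈ inBallA K v r := by
        intro a
        have : ReachLE K k (K.tgt a.1) v := by rw [a.2]; exact hx
        exact ⟨k, by omega, this⟩
      have fwdtgt : ∀ a : {a : K.A // K.tgt a = x.val},
          H.tgt (γ.onA ⟨a.1, fwdmem a⟩) = γ.onV x := by
        intro a
        refine (γ.map_tgt _).symm.trans ?_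
        congr 1
        exact Subtype.ext a.2
      set fwd : {a : K.A // K.tgt a = x.val} → {b : H.A // H.tgt b = γ.onV x} :=
        fun a => ⟨γ.onA ⟨a.1, fwdmem a⟩, fwdtgt a⟩ with hfwd
      -- backward map via the fibration lift
      have liftex : ∀ b : {b : H.A // H.tgt b = γ.onV x},
          ∃! a' : G.A, φ.onA a' = b.1 ∧ G.tgt a' = (db.onV x).val := by
        intro b
        exact hφ b.1 (db.onV x).val (by rw [← hγx]; exact b.2.symm)
      have liftmem : ∀ b, (liftex b).choose ∈ inBallA G w r := by
        intro b
        refine ⟨k, by omega, ?_⟩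
        rw [(liftex b).choose_spec.1.2]
        exact hGreach
      have bwdtgt : ∀ b, K.tgt (eA.symm ⟨(liftex b).choose, liftmem b⟩).val = x.val := by
        intro b
        have h1 : db.onV ((inBall K v r).tgt (eA.symm ⟨(liftex b).choose, liftmem b⟩)) =
            (inBall G w r).tgt ⟨(liftex b).choose, liftmem b⟩ := by
          rw [db.map_tgt]
          congr 1
          exact Equiv.ofBijective_apply_symm_apply db.onA hbA _
        have h2 : (inBall G w r).tgt ⟨(liftex b).choose, liftmem b⟩ = db.onV x :=
          Subtype.ext (liftex b).choose_spec.1.2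
        have h3 := hbV.1 (h1.trans h2)
        exact congrArg Subtype.val h3
      set bwd : {b : H.A // H.tgt b = γ.onV x} → {a : K.A // K.tgt a = x.val} :=
        fun b => ⟨(eA.symm ⟨(liftex b).choose, liftmem b⟩).val, bwdtgt b⟩ with hbwd
      have hγA : ∀ c : (inBall K v r).A, γ.onA c = φ.onA (db.onA c).val := by
        intro c; rw [hγ]; rfl
      have rinv : Function.RightInverse bwd fwd := by
        intro b
        apply Subtype.ext
        show γ.onA ⟨(eA.symm ⟨(liftex b).choose, liftmem b⟩).val, _⟩ = b.1
        have : (⟨(eA.symm ⟨(liftex b).choose, liftmem b⟩).val, fwdmem (bwd b)⟩ :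
            (inBall K v r).A) = eA.symm ⟨(liftex b).choose, liftmem b⟩ :=
          Subtype.ext rfl
        rw [this, hγA]
        have h4 : db.onA (eA.symm ⟨(liftex b).choose, liftmem b⟩) =
            ⟨(liftex b).choose, liftmem b⟩ :=
          Equiv.ofBijective_apply_symm_apply db.onA hbA _
        rw [h4]
        exact (liftex b).choose_spec.1.1
      have linv : Function.LeftInverse bwd fwd := by
        intro a
        apply Subtype.ext
        have huniq : (liftex (fwd a)).choose = (db.onA ⟨a.1, fwdmem a⟩).val := by
          apply ((liftex (fwd a)).choose_spec.2 _ _).symm.trans rfl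
          constructor
          · exact (hγA _).symm
          · have h5 : (inBall G w r).tgt (db.onA ⟨a.1, fwdmem a⟩) = db.onV x := by
              refine (db.map_tgt _).symm.trans ?_
              congr 1
              exact Subtype.ext a.2
            exact congrArg Subtype.val h5
        show (eA.symm ⟨(liftex (fwd a)).choose, liftmem (fwd a)⟩).val = a.1
        have h6 : (⟨(liftex (fwd a)).choose, liftmem (fwd a)⟩ : (inBall G w r).A) =
            db.onA ⟨a.1, fwdmem a⟩ := Subtype.ext huniq
        rw [h6]
        have h7 : eA.symm (db.onA ⟨a.1, fwdmem a⟩) = ⟨a.1, fwdmem a⟩ :=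
          Equiv.ofBijective_symm_apply_apply db.onA hbA _
        rw [h7]
      show δ (syncRun K δ xK t x.val) (inNbhd K (syncRun K δ xK t) x.val) = _
      have hstate := ih x k (by omega) hx
      have hnbhd : inNbhd K (syncRun K δ xK t) x.val =
          inNbhd H (syncRun H δ xH t) (γ.onV x) := by
        apply inNbhd_congr _ _ _ _ ⟨fwd, bwd, linv, rinv⟩
        intro a
        have hsrc : ReachLE K (k + 1) (K.src a.1) v :=
          Or.inr ⟨a.1, rfl, by rw [a.2]; exact hx⟩
        have hmemV : K.src a.1 ∈ inBallV K v r := ReachLE.mono (by omega) hsrc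
        have := ih ⟨K.src a.1, hmemV⟩ (k + 1) (by omega) hsrc
        rw [this]
        congr 1
        exact γ.map_src (⟨a.1, fwdmem a⟩ : (inBall K v r).A)
      rw [hstate, hnbhd]
      rfl
  intro t ht
  exact main t ⟨v, center_mem K v r⟩ 0 (by omega) rfl
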